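/- For every odd integer n ≥ 1, the number of partitions of n into odd parts equals the sum, over all odd triangular numbers t = j(j+1)/2 with t ≤ n, of p((n − t)/2); that is, p_o(n) = p((n−1)/2) + p((n−3)/2) + p((n−15)/2) + p((n−21)/2) + ⋯, the sum ranging over all nonnegative integers j with j(j+1)/2 odd and j(j+1)/2 ≤ n. -/

import Mathlib

/-!
# Euler's Partition Theorem

This file proves Theorem 45 from the [100 Theorems List](https://www.cs.ru.nl/~freek/100/).

The theorem concerns the counting of integer partitions -- ways of
writing a positive integer `n` as a sum of positive integer parts.

Specifically, Euler proved that the number of integer partitions of `n`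
into *distinct* parts equals the number of partitions of `n` into *odd*
parts.

## Proof outline

The proof is based on the generating functions for odd and distinct partitions, which turn out to be
equal:

$$\prod_{i=0}^\infty \frac {1}{1-X^{2i+1}} = \prod_{i=0}^\infty (1+X^{i+1})$$

In fact, we do not take a limit: it turns out that comparing the `n`'th coefficients of the partial
products up to `m := n + 1` is sufficient.

In particular, we

1. define the partial product for the generating function for odd partitions `partialOddGF m` :=
  $$\prod_{i=0}^m \frac {1}{1-X^{2i+1}}$$;
2. prove `oddGF_prop`: if `m` is big enough (`m * 2 > n`), the partial product's coefficient counts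
  the number of odd partitions;
3. define the partial product for the generating function for distinct partitions
  `partialDistinctGF m` := $$\prod_{i=0}^m (1+X^{i+1})$$;
4. prove `distinctGF_prop`: if `m` is big enough (`m + 1 > n`), the `n`th coefficient of the
  partial product counts the number of distinct partitions of `n`;
5. prove `same_coeffs`: if m is big enough (`m ≥ n`), the `n`th coefficient of the partial products
  are equal;
6. combine the above in `partition_theorem`.

## References
https://en.wikipedia.org/wiki/Partition_(number_theory)#Odd_parts_and_distinct_parts
-/


open PowerSeries

namespace Theorems100

noncomputable section

variable {α : Type*}

open Finset

open scoped Classical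

/-- The partial product for the generating function for odd partitions.
TODO: As `m` tends to infinity, this converges (in the `X`-adic topology).

If `m` is sufficiently large, the `i`th coefficient gives the number of odd partitions of the
natural number `i`: proved in `oddGF_prop`.
It is stated for an arbitrary field `α`, though it usually suffices to use `ℚ` or `ℝ`.
-/
def partialOddGF (m : ℕ) [Field α] :=
  ∏ i ∈ range m, (1 - (X : PowerSeries α) ^ (2 * i + 1))⁻¹

/-- The partial product for the generating function for distinct partitions.
TODO: As `m` tends to infinity, this converges (in the `X`-adic topology).

If `m` is sufficiently large, the `i`th coefficient gives the number of distinct partitions of the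
natural number `i`: proved in `distinctGF_prop`.
It is stated for an arbitrary commutative semiring `α`, though it usually suffices to use `ℕ`, `ℚ`
or `ℝ`.
-/
def partialDistinctGF (m : ℕ) [CommSemiring α] :=
  ∏ i ∈ range m, (1 + (X : PowerSeries α) ^ (i + 1))

open Finset.HasAntidiagonal

universe u
variable {ι : Type u}

/-- A convenience constructor for the power series whose coefficients indicate a subset. -/
def indicatorSeries (α : Type*) [Semiring α] (s : Set ℕ) : PowerSeries α :=
  PowerSeries.mk fun n => if n ∈ s then 1 else 0

theorem coeff_indicator (s : Set ℕ) [Semiring α] (n : ℕ) :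
    coeff (R := α) n (indicatorSeries _ s) = if n ∈ s then 1 else 0 :=
  coeff_mk _ _

theorem coeff_indicator_pos (s : Set ℕ) [Semiring α] (n : ℕ) (h : n ∈ s) :
    coeff (R := α) n (indicatorSeries _ s) = 1 := by rw [coeff_indicator, if_pos h]

theorem coeff_indicator_neg (s : Set ℕ) [Semiring α] (n : ℕ) (h : n ∉ s) :
    coeff (R := α) n (indicatorSeries _ s) = 0 := by rw [coeff_indicator, if_neg h]

theorem constantCoeff_indicator (s : Set ℕ) [Semiring α] :
    constantCoeff (R := α) (indicatorSeries _ s) = if 0 ∈ s then 1 else 0 :=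
  rfl

theorem two_series (i : ℕ) [Semiring α] :
    1 + (X : PowerSeries α) ^ i.succ = indicatorSeries α {0, i.succ} := by
  ext n
  simp only [coeff_indicator, coeff_one, coeff_X_pow, Set.mem_insert_iff, Set.mem_singleton_iff,
    map_add]
  cases' n with d
  · simp [(Nat.succ_ne_zero i).symm]
  · simp [Nat.succ_ne_zero d]

theorem num_series' [Field α] (i : ℕ) :
    (1 - (X : PowerSeries α) ^ (i + 1))⁻¹ = indicatorSeries α {k | i + 1 ∣ k} := by
  rw [PowerSeries.inv_eq_iff_mul_eq_one]
  · ext n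
    cases n with
    | zero => simp [mul_sub, zero_pow, constantCoeff_indicator]
    | succ n =>
      simp only [coeff_one, if_false, mul_sub, mul_one, coeff_indicator,
        LinearMap.map_sub, reduceCtorEq]
      simp_rw [coeff_mul, coeff_X_pow, coeff_indicator, @boole_mul _ _ _ _]
      erw [@sum_ite _ _ _ _ (fun x : ℕ × ℕ => x.1 ∈ {k | i + 1 ∣ k}) (fun _ => Classical.propDecidable _), sum_ite]
      simp_rw [@filter_filter _ _ _ _ _, sum_const_zero, add_zero, sum_const, nsmul_eq_mul, mul_one,
        sub_eq_iff_eq_add, zero_add]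
      symm
      split_ifs with h
      · suffices #{a ∈ antidiagonal (n + 1) | i + 1 ∣ a.fst ∧ a.snd = i + 1} = 1 by
          simp only [Set.mem_setOf_eq]; convert congr_arg ((↑) : ℕ → α) this; norm_cast
        rw [card_eq_one]
        cases' h with p hp
        refine ⟨((i + 1) * (p - 1), i + 1), ?_⟩
        ext ⟨a₁, a₂⟩
        simp only [mem_filter, Prod.mk.injEq, HasAntidiagonal.mem_antidiagonal, mem_singleton]
        constructor
        · rintro ⟨a_left, ⟨a, rfl⟩, rfl⟩
          refine ⟨?_, rfl⟩
          rw [Nat.mul_sub_left_distrib, ← hp, ← a_left, mul_one, Nat.add_sub_cancel]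
        · rintro ⟨rfl, rfl⟩
          match p with
          | 0 => rw [mul_zero] at hp; cases hp
          | p + 1 => rw [hp]; simp [mul_add]
      · suffices #{a ∈ antidiagonal (n + 1) | i + 1 ∣ a.fst ∧ a.snd = i + 1} = 0 by
          simp only [Set.mem_setOf_eq]; convert congr_arg ((↑) : ℕ → α) this; norm_cast
        rw [card_eq_zero]
        apply eq_empty_of_forall_notMem
        simp only [Prod.forall, mem_filter, not_and, HasAntidiagonal.mem_antidiagonal]
        rintro _ h₁ h₂ ⟨a, rfl⟩ rfl
        apply h
        simp [← h₂]
  · simp [zero_pow]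

def mkOdd : ℕ ↪ ℕ :=
  ⟨fun i => 2 * i + 1, fun x y h => by linarith⟩

-- The main workhorse of the partition theorem proof.
theorem partialGF_prop (α : Type*) [CommSemiring α] (n : ℕ) (s : Finset ℕ) (hs : ∀ i ∈ s, 0 < i)
    (c : ℕ → Set ℕ) (hc : ∀ i, i ∉ s → 0 ∈ c i) :
    #{p : n.Partition | (∀ j, p.parts.count j ∈ c j) ∧ ∀ j ∈ p.parts, j ∈ s} =
      coeff (R := α) n (∏ i ∈ s, indicatorSeries α ((· * i) '' c i)) := by
  simp_rw [coeff_prod, coeff_indicator, prod_boole, sum_boole]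
  apply congr_arg
  simp only [mem_univ, forall_true_left, not_and, not_forall, exists_prop,
    Set.mem_image, not_exists]
  set φ : (a : Nat.Partition n) →
    a ∈ filter (fun p ↦ (∀ (j : ℕ), Multiset.count j p.parts ∈ c j) ∧ ∀ j ∈ p.parts, j ∈ s) univ →
    ℕ →₀ ℕ := fun p _ => {
      toFun := fun i => Multiset.count i p.parts • i
      support := Finset.filter (fun i => i ≠ 0) p.parts.toFinset
      mem_support_toFun := fun a => by
        simp only [smul_eq_mul, ne_eq, mul_eq_zero, Multiset.count_eq_zero]
        rw [not_or, not_not]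
        simp only [Multiset.mem_toFinset, not_not, mem_filter] }
  refine Finset.card_bij φ ?_ ?_ ?_
  · intro a ha
    simp only [φ, not_forall, not_exists, not_and, exists_prop, mem_filter]
    rw [mem_finsuppAntidiag]
    dsimp only [ne_eq, smul_eq_mul, id_eq, eq_mpr_eq_cast, le_eq_subset, Finsupp.coe_mk]
    simp only [mem_univ, forall_true_left, not_and, not_forall, exists_prop,
      mem_filter, true_and] at ha
    refine ⟨⟨?_, fun i ↦ ?_⟩, fun i _ ↦ ⟨a.parts.count i, ha.1 i, rfl⟩⟩
    · conv_rhs => simp [← a.parts_sum]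
      rw [sum_multiset_count_of_subset _ s]
      · simp only [smul_eq_mul]
      · intro i
        simp only [Multiset.mem_toFinset, not_not, mem_filter]
        apply ha.2
    · simp only [ne_eq, Multiset.mem_toFinset, not_not, mem_filter, and_imp]
      exact fun hi _ ↦ ha.2 i hi
  · intro p₁ hp₁ p₂ hp₂ h
    apply Nat.Partition.ext
    simp only [true_and, mem_univ, mem_filter] at hp₁ hp₂
    ext i
    simp only [φ, ne_eq, Multiset.mem_toFinset, not_not, smul_eq_mul, Finsupp.mk.injEq] at h
    by_cases hi : i = 0
    · rw [hi]
      rw [Multiset.count_eq_zero_of_notMem]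
      · rw [Multiset.count_eq_zero_of_notMem]
        intro a; exact Nat.lt_irrefl 0 (hs 0 (hp₂.2 0 a))
      intro a; exact Nat.lt_irrefl 0 (hs 0 (hp₁.2 0 a))
    · rw [← mul_left_inj' hi]
      rw [funext_iff] at h
      exact h.2 i
  · simp only [φ, mem_filter, mem_finsuppAntidiag, mem_univ, exists_prop, true_and, and_assoc]
    rintro f ⟨hf, hf₃, hf₄⟩
    have hf' : f ∈ finsuppAntidiag s n := mem_finsuppAntidiag.mpr ⟨hf, hf₃⟩
    simp only [mem_finsuppAntidiag] at hf'
    refine ⟨⟨∑ i ∈ s, Multiset.replicate (f i / i) i, ?_, ?_⟩, ?_, ?_, ?_⟩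
    · intro i hi
      simp only [exists_prop, Multiset.mem_sum, mem_map, Function.Embedding.coeFn_mk] at hi
      rcases hi with ⟨t, ht, z⟩
      apply hs
      rwa [Multiset.eq_of_mem_replicate z]
    · simp_rw [Multiset.sum_sum, Multiset.sum_replicate, Nat.nsmul_eq_mul]
      rw [← hf'.1]
      refine sum_congr rfl fun i hi => Nat.div_mul_cancel ?_
      rcases hf₄ i hi with ⟨w, _, hw₂⟩
      rw [← hw₂]
      exact dvd_mul_left _ _
    · intro i
      simp_rw [Multiset.count_sum', Multiset.count_replicate, sum_ite_eq']
      split_ifs with h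
      · rcases hf₄ i h with ⟨w, hw₁, hw₂⟩
        rwa [← hw₂, Nat.mul_div_cancel _ (hs i h)]
      · exact hc _ h
    · intro i hi
      rw [Multiset.mem_sum] at hi
      rcases hi with ⟨j, hj₁, hj₂⟩
      rwa [Multiset.eq_of_mem_replicate hj₂]
    · ext i
      simp_rw [Multiset.count_sum', Multiset.count_replicate, sum_ite_eq']
      simp only [ne_eq, Multiset.mem_toFinset, not_not, smul_eq_mul, ite_mul,
        zero_mul, Finsupp.coe_mk]
      split_ifs with h
      · apply Nat.div_mul_cancel
        rcases hf₄ i h with ⟨w, _, hw₂⟩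
        apply Dvd.intro_left _ hw₂
      · apply symm
        rw [← Finsupp.notMem_support_iff]
        exact notMem_mono hf'.2 h

theorem partialOddGF_prop [Field α] (n m : ℕ) :
    #{p : n.Partition | ∀ j ∈ p.parts, j ∈ (range m).map mkOdd} = coeff (R := α) n (partialOddGF m) := by
  rw [partialOddGF]
  convert partialGF_prop α n
    ((range m).map mkOdd) _ (fun _ => Set.univ) (fun _ _ => trivial) using 2
  · congr
    simp only [true_and, forall_const, Set.mem_univ]
  · rw [Finset.prod_map]
    simp_rw [num_series']
    congr! 2 with x
    ext k
    constructor
    · rintro ⟨p, rfl⟩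
      refine ⟨p, ⟨⟩, ?_⟩
      apply mul_comm
    rintro ⟨a_w, -, rfl⟩
    apply Dvd.intro_left a_w rfl
  · intro i
    rw [mem_map]
    rintro ⟨a, -, rfl⟩
    exact Nat.succ_pos _

/-- If m is big enough, the partial product's coefficient counts the number of odd partitions -/
theorem oddGF_prop [Field α] (n m : ℕ) (h : n < m * 2) :
    #(Nat.Partition.odds n) = coeff (R := α) n (partialOddGF m) := by
  rw [← partialOddGF_prop, Nat.Partition.odds]
  unfold Nat.Partition.restricted
  congr with p
  apply forall₂_congr
  intro i hi
  have hin : i ≤ n := by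
    simpa [p.parts_sum] using Multiset.single_le_sum (fun _ _ => Nat.zero_le _) _ hi
  simp only [mkOdd, exists_prop, mem_range, Function.Embedding.coeFn_mk, mem_map]
  constructor
  · intro hi₂
    have := Nat.mod_add_div i 2
    rw [Nat.not_even_iff] at hi₂
    rw [hi₂, add_comm] at this
    refine ⟨i / 2, ?_, this⟩
    rw [Nat.div_lt_iff_lt_mul zero_lt_two]
    exact lt_of_le_of_lt hin h
  · rintro ⟨a, -, rfl⟩
    rw [even_iff_two_dvd]
    apply Nat.two_not_dvd_two_mul_add_one

theorem partialDistinctGF_prop [CommSemiring α] (n m : ℕ) :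
    #{p : n.Partition |
        p.parts.Nodup ∧ ∀ j ∈ p.parts, j ∈ (range m).map ⟨Nat.succ, Nat.succ_injective⟩} =
      coeff (R := α) n (partialDistinctGF m) := by
  rw [partialDistinctGF]
  convert partialGF_prop α n
    ((range m).map ⟨Nat.succ, Nat.succ_injective⟩) _ (fun _ => {0, 1}) (fun _ _ => Or.inl rfl)
    using 2
  · congr! with p
    rw [Multiset.nodup_iff_count_le_one]
    congr! 1 with i
    rcases Multiset.count i p.parts with (_ | _ | ms) <;> simp
  · simp_rw [Finset.prod_map, two_series]
    congr with i
    simp [Set.image_pair]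
  · simp only [mem_map, Function.Embedding.coeFn_mk]
    rintro i ⟨_, _, rfl⟩
    apply Nat.succ_pos

/-- If m is big enough, the partial product's coefficient counts the number of distinct partitions
-/
theorem distinctGF_prop [CommSemiring α] (n m : ℕ) (h : n < m + 1) :
    #(Nat.Partition.distincts n) = coeff (R := α) n (partialDistinctGF m) := by
  rw [← partialDistinctGF_prop, Nat.Partition.distincts]
  congr with p
  apply (and_iff_left _).symm
  intro i hi
  have : i ≤ n := by
    simpa [p.parts_sum] using Multiset.single_le_sum (fun _ _ => Nat.zero_le _) _ hi
  simp only [mkOdd, exists_prop, mem_range, Function.Embedding.coeFn_mk, mem_map]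
  refine ⟨i - 1, ?_, Nat.succ_pred_eq_of_pos (p.parts_pos hi)⟩
  rw [tsub_lt_iff_right (Nat.one_le_iff_ne_zero.mpr (p.parts_pos hi).ne')]
  exact lt_of_le_of_lt this h

/-- The key proof idea for the partition theorem, showing that the generating functions for both
sequences are ultimately the same (since the factor converges to 0 as m tends to infinity).
It's enough to not take the limit though, and just consider large enough `m`.
-/
theorem same_gf [Field α] (m : ℕ) :
    (partialOddGF m * (range m).prod fun i => 1 - (X : PowerSeries α) ^ (m + i + 1)) =
      partialDistinctGF m := by
  rw [partialOddGF, partialDistinctGF]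
  induction' m with m ih
  · simp
  set! π₀ : PowerSeries α := ∏ i ∈ range m, (1 - X ^ (m + 1 + i + 1)) with hπ₀
  set! π₁ : PowerSeries α := ∏ i ∈ range m, (1 - X ^ (2 * i + 1))⁻¹ with hπ₁
  set! π₂ : PowerSeries α := ∏ i ∈ range m, (1 - X ^ (m + i + 1)) with hπ₂
  set! π₃ : PowerSeries α := ∏ i ∈ range m, (1 + X ^ (i + 1)) with hπ₃
  rw [← hπ₃] at ih
  have h : constantCoeff (R := α) (1 - X ^ (2 * m + 1)) ≠ 0 := by
    rw [RingHom.map_sub, RingHom.map_pow, constantCoeff_one, constantCoeff_X,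
      zero_pow (2 * m).succ_ne_zero, sub_zero]
    exact one_ne_zero
  calc
    (∏ i ∈ range (m + 1), (1 - X ^ (2 * i + 1))⁻¹) *
          ∏ i ∈ range (m + 1), (1 - X ^ (m + 1 + i + 1)) =
        π₁ * (1 - X ^ (2 * m + 1))⁻¹ * (π₀ * (1 - X ^ (m + 1 + m + 1))) := by
      rw [prod_range_succ _ m, ← hπ₁, prod_range_succ _ m, ← hπ₀]
    _ = π₁ * (1 - X ^ (2 * m + 1))⁻¹ * (π₀ * ((1 + X ^ (m + 1)) * (1 - X ^ (m + 1)))) := by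
      rw [← sq_sub_sq, one_pow, add_assoc _ m 1, ← two_mul (m + 1), pow_mul']
    _ = π₀ * (1 - X ^ (m + 1)) * (1 - X ^ (2 * m + 1))⁻¹ * (π₁ * (1 + X ^ (m + 1))) := by ring
    _ =
        (∏ i ∈ range (m + 1), (1 - X ^ (m + 1 + i))) * (1 - X ^ (2 * m + 1))⁻¹ *
          (π₁ * (1 + X ^ (m + 1))) := by
      rw [prod_range_succ', add_zero, hπ₀]; simp_rw [← add_assoc]
    _ = π₂ * (1 - X ^ (m + 1 + m)) * (1 - X ^ (2 * m + 1))⁻¹ * (π₁ * (1 + X ^ (m + 1))) := by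
      rw [add_right_comm, hπ₂, ← prod_range_succ]; simp_rw [add_right_comm]
    _ = π₂ * (1 - X ^ (2 * m + 1)) * (1 - X ^ (2 * m + 1))⁻¹ * (π₁ * (1 + X ^ (m + 1))) := by
      rw [two_mul, add_right_comm _ m 1]
    _ = (1 - X ^ (2 * m + 1)) * (1 - X ^ (2 * m + 1))⁻¹ * π₂ * (π₁ * (1 + X ^ (m + 1))) := by ring
    _ = π₂ * (π₁ * (1 + X ^ (m + 1))) := by rw [PowerSeries.mul_inv_cancel _ h, one_mul]
    _ = π₁ * π₂ * (1 + X ^ (m + 1)) := by ring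
    _ = π₃ * (1 + X ^ (m + 1)) := by rw [ih]
    _ = _ := by rw [prod_range_succ]

theorem same_coeffs [Field α] (m n : ℕ) (h : n ≤ m) :
    coeff (R := α) n (partialOddGF m) = coeff (R := α) n (partialDistinctGF m) := by
  rw [← same_gf, coeff_mul_prod_one_sub_of_lt_order]
  rintro i -
  rw [order_X_pow]
  exact mod_cast Nat.lt_succ_of_le (le_add_right h)

theorem partition_theorem (n : ℕ) : #(Nat.Partition.odds n) = #(Nat.Partition.distincts n) := by
  suffices (#(Nat.Partition.odds n) : ℚ) = #(Nat.Partition.distincts n) from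
    mod_cast this
  rw [distinctGF_prop n (n + 1) (by linarith)]
  rw [oddGF_prop n (n + 1) (by linarith)]
  apply same_coeffs (n + 1) n n.le_succ

end

end Theorems100

namespace GaussAux

open Finset PowerSeries Theorems100

noncomputable section
abbrev S : Type := PowerSeries ℚ

def F (r : ℕ) : S := ∏ i ∈ range r, (1 - (X : S)^(i+1))

lemma constCoeff_F (r : ℕ) : constantCoeff (R := ℚ) (F r) = 1 := by
  rw [F, map_prod]
  apply Finset.prod_eq_one
  intro i _
  simp [zero_pow]

lemma F_ne_zero (r : ℕ) : F r ≠ 0 := by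
  intro h
  have := constCoeff_F r
  rw [h] at this
  simp at this

lemma F_mul_inv (r : ℕ) : F r * (F r)⁻¹ = 1 :=
  PowerSeries.mul_inv_cancel _ (by rw [constCoeff_F]; exact one_ne_zero)

lemma F_inv_mul (r : ℕ) : (F r)⁻¹ * F r = 1 := by rw [mul_comm]; exact F_mul_inv r

lemma F_succ (r : ℕ) : F (r+1) = F r * (1 - X^(r+1)) := prod_range_succ _ _

lemma F_zero : F 0 = 1 := prod_range_zero _

def gb (n k : ℕ) : S := if k ≤ n then F n * (F k)⁻¹ * (F (n-k))⁻¹ else 0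

lemma gb_of_gt {n k : ℕ} (h : n < k) : gb n k = 0 := if_neg (by omega)

lemma gb_mul_F {n k : ℕ} (h : k ≤ n) : gb n k * (F k * F (n-k)) = F n := by
  rw [gb, if_pos h]
  have : F n * (F k)⁻¹ * (F (n-k))⁻¹ * (F k * F (n-k))
      = F n * ((F k)⁻¹ * F k) * ((F (n-k))⁻¹ * F (n-k)) := by ring
  rw [this, F_inv_mul, F_inv_mul, mul_one, mul_one]

lemma gb_zero_right (n : ℕ) : gb n 0 = 1 := by
  have := gb_mul_F (Nat.zero_le n)
  rw [F_zero, Nat.sub_zero, one_mul] at this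
  exact mul_right_cancel₀ (F_ne_zero n) (by rw [this, one_mul])

lemma gb_self (n : ℕ) : gb n n = 1 := by
  have := gb_mul_F (le_refl n)
  rw [Nat.sub_self, F_zero, mul_one] at this
  exact mul_right_cancel₀ (F_ne_zero n) (by rw [this, one_mul])

lemma gb_one_mul (n : ℕ) : gb n 1 * (1 - X) = 1 - (X:S)^n := by
  rcases n with _ | n
  · rw [gb_of_gt (by omega)]; simp
  · have h1 : (1 : ℕ) ≤ n + 1 := by omega
    have h := gb_mul_F h1
    have hF1 : F 1 = 1 - X := by rw [F_succ, F_zero, one_mul, pow_one]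
    simp only [Nat.add_sub_cancel, hF1] at h
    apply mul_right_cancel₀ (F_ne_zero n)
    calc gb (n+1) 1 * (1 - X) * F n = gb (n+1) 1 * ((1 - X) * F n) := by ring
    _ = F (n+1) := h
    _ = (1 - X^(n+1)) * F n := by rw [F_succ]; ring

/-! ### triangular exponents -/

def half (d : ℕ) : ℕ := d*(d+1)/2

lemma half_succ (d : ℕ) : half (d+1) = half d + (d+1) := by
  have h : (d+1)*(d+1+1) = d*(d+1) + 2*(d+1) := by ring
  rw [half, half, h, Nat.add_mul_div_left _ _ (by norm_num : 0 < 2)]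

lemma half_zero : half 0 = 0 := rfl

lemma le_half (j : ℕ) : j ≤ half j := by
  rcases j with _ | j
  · simp [half]
  · rw [half, Nat.le_div_iff_mul_le (by norm_num : 0 < 2)]
    exact Nat.mul_le_mul_left (j+1) (by omega)

/-- `tri k m = T_{k-m}` where `T_j = j(j+1)/2` for `j ∈ ℤ`. -/
def tri (k m : ℕ) : ℕ := if m ≤ k then half (k-m) else half (m-k-1)

lemma tri_of_ge {k m : ℕ} (h : m ≤ k) : tri k m = half (k-m) := if_pos h
lemma tri_of_lt {k m : ℕ} (h : k < m) : tri k m = half (m-k-1) := if_neg (by omega)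

lemma tri_L1 (k m : ℕ) : tri k (m+1) + k = tri k m + m := by
  rcases Nat.lt_or_ge k (m+1) with h | h
  · rcases Nat.eq_or_lt_of_le (Nat.lt_succ_iff.mp h) with heq | hlt
    · rw [tri_of_lt (by omega), tri_of_ge (by omega)]
      have e1 : m + 1 - k - 1 = 0 := by omega
      have e2 : k - m = 0 := by omega
      rw [e1, e2]; omega
    · rw [tri_of_lt (by omega), tri_of_lt (by omega)]
      have e1 : m + 1 - k - 1 = (m - k - 1) + 1 := by omega
      rw [e1]
      have := half_succ (m - k - 1)
      omega
  · rw [tri_of_ge (by omega), tri_of_ge (by omega)]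
    have e1 : k - m = (k - (m+1)) + 1 := by omega
    rw [e1]
    have := half_succ (k - (m+1))
    omega

lemma tri_L2 (k m : ℕ) (hk : k ≤ 2*m) :
    tri k m + (m+1) = tri (k+2) (m+1) + (2*m - k) := by
  rcases Nat.lt_or_ge k m with h | h
  · rcases Nat.eq_or_lt_of_le (by omega : k + 1 ≤ m) with heq | hlt
    · rw [tri_of_lt (by omega), tri_of_ge (by omega)]
      have e1 : m - k - 1 = 0 := by omega
      have e2 : k + 2 - (m+1) = 0 := by omega
      rw [e1, e2]
      simp only [half_zero]
      omega
    · rw [tri_of_lt (by omega), tri_of_lt (by omega)]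
      have e1 : m - k - 1 = (m + 1 - (k+2) - 1) + 1 := by omega
      rw [e1]
      have := half_succ (m + 1 - (k+2) - 1)
      omega
  · rw [tri_of_ge (by omega), tri_of_ge (by omega)]
    have e1 : k + 2 - (m+1) = (k - m) + 1 := by omega
    rw [e1]
    have := half_succ (k - m)
    omega

lemma tri_shift (k m : ℕ) : tri (k+1) m = tri (k+2) (m+1) := by
  rcases Nat.lt_or_ge (k+1) m with h | h
  · rw [tri_of_lt (by omega), tri_of_lt (by omega)]
    have e1 : m - (k+1) - 1 = m + 1 - (k+2) - 1 := by omega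
    rw [e1]
  · rw [tri_of_ge (by omega), tri_of_ge (by omega)]
    have e1 : k + 1 - m = k + 2 - (m+1) := by omega
    rw [e1]

lemma tri_zero_one (m : ℕ) : tri 0 m = tri 1 (m+1) := by
  rcases Nat.eq_zero_or_pos m with rfl | h
  · rw [tri_of_ge (by omega), tri_of_ge (by omega)]
  · rw [tri_of_lt (by omega), tri_of_lt (by omega)]
    have e1 : m - 0 - 1 = m + 1 - 1 - 1 := by omega
    rw [e1]
lemma one_sub_X_ne_zero : (1 - X : S) ≠ 0 := by
  intro h
  have : constantCoeff (R := ℚ) (1 - X) = 1 := by simp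
  rw [h] at this; simp at this

lemma gb_symm {n k : ℕ} (h : k ≤ n) : gb n k = gb n (n-k) := by
  rw [gb, gb, if_pos h, if_pos (by omega : n - k ≤ n)]
  have : n - (n-k) = k := by omega
  rw [this]; ring

lemma Finv_mul_succ1 (a : ℕ) : (F a)⁻¹ * F (a+1) = 1 - X^(a+1) := by
  rw [F_succ, ← mul_assoc, F_inv_mul, one_mul]

lemma Finv_mul_succ2 (a : ℕ) : (F a)⁻¹ * F (a+2) = (1 - X^(a+1)) * (1 - X^(a+2)) := by
  rw [F_succ, ← mul_assoc, Finv_mul_succ1]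

lemma gb_eq {n k : ℕ} (h : k ≤ n) : gb n k = F n * (F k)⁻¹ * (F (n-k))⁻¹ := if_pos h

lemma star (m k : ℕ) (hk : k ≤ 2*m) :
    gb (2*m+2) (k+2) =
      X^(k+2) * gb (2*m) (k+2) + (1 + X^(2*m+1)) * gb (2*m) (k+1)
        + X^(2*m-k) * gb (2*m) k := by
  by_cases hc : k + 2 ≤ 2*m
  · obtain ⟨u, hu⟩ : ∃ u, 2*m = k + 2 + u := ⟨2*m - (k+2), by omega⟩
    rw [show 2*m - k = u + 2 by omega]
    rw [hu] at *
    apply mul_right_cancel₀ (mul_ne_zero (F_ne_zero (k+2)) (F_ne_zero (u+2)))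
    have t0 : gb (k+2+u+2) (k+2) * (F (k+2) * F (u+2))
        = F (k+2+u) * ((1 - X^(k+2+u+1)) * (1 - X^(k+2+u+2))) := by
      have h := gb_mul_F (show k+2 ≤ k+2+u+2 by omega)
      rw [show k+2+u+2 - (k+2) = u+2 by omega] at h
      rw [h, show k+2+u+2 = (k+2+u+1)+1 by omega, F_succ,
        show k+2+u+1 = (k+2+u)+1 by omega, F_succ]
      ring_nf
    have t1 : gb (k+2+u) (k+2) * (F (k+2) * F (u+2))
        = F (k+2+u) * ((1 - X^(u+1)) * (1 - X^(u+2))) := by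
      rw [gb_eq (show k+2 ≤ k+2+u by omega), show k+2+u - (k+2) = u by omega]
      calc F (k+2+u) * (F (k+2))⁻¹ * (F u)⁻¹ * (F (k+2) * F (u+2))
          = F (k+2+u) * ((F (k+2))⁻¹ * F (k+2)) * ((F u)⁻¹ * F (u+2)) := by ring
        _ = F (k+2+u) * ((1 - X^(u+1)) * (1 - X^(u+2))) := by
            rw [F_inv_mul, Finv_mul_succ2, mul_one]
    have t2 : gb (k+2+u) (k+1) * (F (k+2) * F (u+2))
        = F (k+2+u) * ((1 - X^(k+2)) * (1 - X^(u+2))) := by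
      rw [gb_eq (show k+1 ≤ k+2+u by omega), show k+2+u - (k+1) = u+1 by omega]
      calc F (k+2+u) * (F (k+1))⁻¹ * (F (u+1))⁻¹ * (F (k+2) * F (u+2))
          = F (k+2+u) * ((F (k+1))⁻¹ * F ((k+1)+1)) * ((F (u+1))⁻¹ * F ((u+1)+1)) := by
            rw [show (k+1)+1 = k+2 by omega, show (u+1)+1 = u+2 by omega]; ring
        _ = F (k+2+u) * ((1 - X^(k+2)) * (1 - X^(u+2))) := by
            rw [Finv_mul_succ1, Finv_mul_succ1,
              show k+1+1 = k+2 by omega, show u+1+1 = u+2 by omega]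
            ring
    have t3 : gb (k+2+u) k * (F (k+2) * F (u+2))
        = F (k+2+u) * ((1 - X^(k+1)) * (1 - X^(k+2))) := by
      rw [gb_eq (show k ≤ k+2+u by omega), show k+2+u - k = u+2 by omega]
      calc F (k+2+u) * (F k)⁻¹ * (F (u+2))⁻¹ * (F (k+2) * F (u+2))
          = F (k+2+u) * ((F k)⁻¹ * F (k+2)) * ((F (u+2))⁻¹ * F (u+2)) := by ring
        _ = F (k+2+u) * ((1 - X^(k+1)) * (1 - X^(k+2))) := by
            rw [F_inv_mul, Finv_mul_succ2, mul_one]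
    rw [t0, add_mul, add_mul, mul_assoc, mul_assoc, mul_assoc, t1, t2, t3]
    have hA2 : (X:S)^(k+2) = X^(k+1) * X := by rw [← pow_succ]
    have hC2 : (X:S)^(u+2) = X^(u+1) * X := by rw [← pow_succ]
    have h21 : (X:S)^(k+2+u+1) = X^(k+1) * X^(u+1) * X := by
      rw [← pow_add, ← pow_succ]
      congr 1; omega
    have h22 : (X:S)^(k+2+u+2) = X^(k+1) * X^(u+1) * (X * X) := by
      rw [← pow_add, ← pow_two, ← pow_add]
      congr 1; omega
    rw [hA2, hC2, h21, h22]
    set A := (X:S)^(k+1)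
    set C := (X:S)^(u+1)
    ring
  · by_cases hb : k = 2*m
    · subst hb
      rw [gb_of_gt (show 2*m < 2*m+2 by omega), gb_of_gt (show 2*m < 2*m+1 by omega)]
      rw [show 2*m - 2*m = 0 by omega, pow_zero, gb_self (2*m+2), gb_self (2*m)]
      ring
    · have hm : 1 ≤ m := by omega
      have h1 : gb (2*m+2) (k+2) = gb (2*m+2) 1 := by
        rw [gb_symm (show k+2 ≤ 2*m+2 by omega), show 2*m+2 - (k+2) = 1 by omega]
      have h2 : gb (2*m) (k+1) = 1 := by
        rw [show k+1 = 2*m by omega, gb_self]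
      have h3 : gb (2*m) k = gb (2*m) 1 := by
        rw [gb_symm (show k ≤ 2*m by omega), show 2*m - k = 1 by omega]
      have h4 : gb (2*m) (k+2) = 0 := gb_of_gt (by omega)
      have h5 : 2*m - k = 1 := by omega
      rw [h1, h2, h3, h4, h5, mul_zero, pow_one, mul_one]
      apply mul_right_cancel₀ one_sub_X_ne_zero
      rw [gb_one_mul, add_mul, mul_assoc, gb_one_mul]
      ring

lemma KI0 (m : ℕ) :
    gb (2*m+2) 0 * X^(tri 0 (m+1)) = X^m * (gb (2*m) 0 * X^(tri 0 m)) := by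
  rw [gb_zero_right, gb_zero_right, one_mul, one_mul, ← pow_add]
  congr 1
  have := tri_L1 0 m
  omega

lemma KI1 (m : ℕ) :
    gb (2*m+2) 1 * X^(tri 1 (m+1)) =
      X^m * (gb (2*m) 1 * X^(tri 1 m)) + (1 + X^(2*m+1)) * (gb (2*m) 0 * X^(tri 0 m)) := by
  rw [gb_zero_right, one_mul, tri_zero_one]
  have e1 : (X:S)^m * (gb (2*m) 1 * X^(tri 1 m)) = gb (2*m) 1 * X^(tri 1 m + m) := by
    rw [pow_add]; ring
  rw [e1, show tri 1 m + m = tri 1 (m+1) + 1 by have := tri_L1 1 m; omega]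
  apply mul_right_cancel₀ one_sub_X_ne_zero
  have e2 : gb (2*m+2) 1 * X ^ tri 1 (m+1) * (1 - X)
      = (gb (2*m+2) 1 * (1 - X)) * X ^ tri 1 (m+1) := by ring
  have e3 : (gb (2*m) 1 * X ^ (tri 1 (m+1) + 1) + (1 + X^(2*m+1)) * X ^ tri 1 (m+1)) * (1-X)
      = (gb (2*m) 1 * (1 - X)) * (X ^ tri 1 (m+1) * X) + (1 + X^(2*m+1)) * X ^ tri 1 (m+1) * (1-X) := by
    rw [pow_add, pow_one]; ring
  rw [e2, e3, gb_one_mul, gb_one_mul]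
  have e4 : (X:S)^(2*m+2) = X^(2*m) * X * X := by
    rw [← pow_succ, ← pow_succ]
  have e5 : (X:S)^(2*m+1) = X^(2*m) * X := by rw [← pow_succ]
  rw [e4, e5]
  ring

lemma KI2 (m k : ℕ) :
    gb (2*m+2) (k+2) * X^(tri (k+2) (m+1)) =
      X^m * (gb (2*m) (k+2) * X^(tri (k+2) m))
      + (1 + X^(2*m+1)) * (gb (2*m) (k+1) * X^(tri (k+1) m))
      + X^(m+1) * (gb (2*m) k * X^(tri k m)) := by
  by_cases hk : k ≤ 2*m
  · have e1 : (X:S)^(k+2) * X^(tri (k+2) (m+1)) = X^m * X^(tri (k+2) m) := by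
      rw [← pow_add, ← pow_add]
      congr 1
      have := tri_L1 (k+2) m
      omega
    have e3 : (X:S)^(2*m-k) * X^(tri (k+2) (m+1)) = X^(m+1) * X^(tri k m) := by
      rw [← pow_add, ← pow_add]
      congr 1
      have := tri_L2 k m hk
      omega
    rw [← tri_shift] at e1 e3
    rw [star m k hk, ← tri_shift]
    linear_combination gb (2*m) (k+2) * e1 + gb (2*m) k * e3
  · rw [gb_of_gt (show 2*m+2 < k+2 by omega), gb_of_gt (show 2*m < k+2 by omega),
      gb_of_gt (show 2*m < k+1 by omega), gb_of_gt (show 2*m < k by omega)]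
    simp

def RHSsum (m : ℕ) : S := ∑ k ∈ range (2*m+1), gb (2*m) k * X^(tri k m)

theorem FJ (m : ℕ) :
    (∏ i ∈ range m, ((1 + (X:S)^i) * (1 + X^(i+1)))) = RHSsum m := by
  induction m with
  | zero =>
    rw [prod_range_zero, RHSsum]
    simp only [Nat.mul_zero, Nat.zero_add, range_one, sum_singleton, gb_zero_right, one_mul]
    rw [show tri 0 0 = 0 from rfl, pow_zero]
  | succ m ih =>
    rw [prod_range_succ, ih]
    have hz1 : gb (2*m) (2*m+1) * (X:S)^(tri (2*m+1) m) = 0 := by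
      rw [gb_of_gt (show 2*m < 2*m+1 by omega)]; ring
    have hz2 : gb (2*m) (2*m+2) * (X:S)^(tri (2*m+2) m) = 0 := by
      rw [gb_of_gt (show 2*m < 2*m+2 by omega)]; ring
    have hR : RHSsum (m+1) = ∑ k ∈ range (2*m+3),
        (X^m * (gb (2*m) k * X^(tri k m))
         + (1+X^(2*m+1)) * (if k = 0 then 0 else gb (2*m) (k-1) * X^(tri (k-1) m))
         + X^(m+1) * (if k < 2 then 0 else gb (2*m) (k-2) * X^(tri (k-2) m))) := by
      rw [RHSsum, show 2*(m+1)+1 = 2*m+3 by omega]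
      refine Finset.sum_congr rfl fun k _ => ?_
      rw [show 2*(m+1) = 2*m+2 by omega]
      rcases k with _ | _ | j
      · simpa using KI0 m
      · simpa using KI1 m
      · simpa using KI2 m j
    rw [hR, Finset.sum_add_distrib, Finset.sum_add_distrib,
      ← Finset.mul_sum, ← Finset.mul_sum, ← Finset.mul_sum]
    have s1 : ∑ k ∈ range (2*m+3), gb (2*m) k * (X:S)^(tri k m)
        = ∑ k ∈ range (2*m+1), gb (2*m) k * (X:S)^(tri k m) := by
      rw [show 2*m+3 = (2*m+2)+1 by omega, Finset.sum_range_succ,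
        show 2*m+2 = (2*m+1)+1 by omega, Finset.sum_range_succ]
      rw [show 2*m+1+1 = 2*m+2 by omega, hz1, hz2, add_zero, add_zero]
    have s2 : (∑ k ∈ range (2*m+3), if k = 0 then (0:S) else gb (2*m) (k-1) * X^(tri (k-1) m))
        = ∑ k ∈ range (2*m+1), gb (2*m) k * (X:S)^(tri k m) := by
      rw [show 2*m+3 = (2*m+2)+1 by omega, Finset.sum_range_succ']
      have e : ∀ i : ℕ, (if i+1 = 0 then (0:S) else gb (2*m) (i+1-1) * X^(tri (i+1-1) m))
          = gb (2*m) i * X^(tri i m) := fun i => by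
        rw [if_neg (Nat.succ_ne_zero i)]; norm_num
      rw [Finset.sum_congr rfl (fun i _ => e i), if_pos rfl, add_zero,
        show 2*m+2 = (2*m+1)+1 by omega, Finset.sum_range_succ, hz1, add_zero]
    have s3 : (∑ k ∈ range (2*m+3), if k < 2 then (0:S) else gb (2*m) (k-2) * X^(tri (k-2) m))
        = ∑ k ∈ range (2*m+1), gb (2*m) k * (X:S)^(tri k m) := by
      rw [show 2*m+3 = (2*m+2)+1 by omega, Finset.sum_range_succ',
        show 2*m+2 = (2*m+1)+1 by omega, Finset.sum_range_succ']
      have e : ∀ i : ℕ, (if i+1+1 < 2 then (0:S) else gb (2*m) (i+1+1-2) * X^(tri (i+1+1-2) m))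
          = gb (2*m) i * X^(tri i m) := fun i => by
        rw [if_neg (by omega), show i+1+1-2 = i by omega]
      rw [Finset.sum_congr rfl (fun i _ => e i), if_pos (by omega : (0:ℕ) < 2),
        if_pos (by omega : 0+1 < 2), add_zero, add_zero]
    rw [s1, s2, s3, RHSsum]
    have hp : (X:S)^(2*m+1) = X^m * X^(m+1) := by
      rw [← pow_add]; congr 1; omega
    rw [hp]
    ring
/-! ## products -/

def OddP (r : ℕ) : S := ∏ i ∈ range r, (1 - X^(2*i+1))
def EvenP (r : ℕ) : S := ∏ i ∈ range r, (1 - X^(2*i+2))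
def Dist (r : ℕ) : S := ∏ i ∈ range r, (1 + X^(i+1))
def pEG (r : ℕ) : S := ∏ i ∈ range r, (1 - X^(2*i+2))⁻¹
def Th (n : ℕ) : S := ∑ j ∈ range (n+1), if half j ≤ n then (X:S)^(half j) else 0

lemma cc_one_sub (j : ℕ) : constantCoeff (R := ℚ) (1 - X^(j+1)) = 1 := by simp [zero_pow]

lemma one_sub_ne_zero (j : ℕ) : (1 - (X:S)^(j+1)) ≠ 0 := fun h => by
  have := cc_one_sub j; rw [h] at this; simp at this

lemma EvenP_mul_pEG (r : ℕ) : EvenP r * pEG r = 1 := by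
  rw [EvenP, pEG, ← Finset.prod_mul_distrib]
  apply Finset.prod_eq_one
  intro i _
  exact PowerSeries.mul_inv_cancel _ (by rw [show 2*i+2 = (2*i+1)+1 by omega, cc_one_sub]; exact one_ne_zero)

lemma F_split (r : ℕ) : F (2*r) = OddP r * EvenP r := by
  induction r with
  | zero => simp [F_zero, OddP, EvenP]
  | succ r ih =>
    rw [show 2*(r+1) = (2*r+1)+1 by omega, F_succ, show 2*r+1 = (2*r)+1 by omega, F_succ,
      OddP, EvenP, prod_range_succ, prod_range_succ, ← OddP, ← EvenP, ih,
      show 2*r+1+1 = 2*r+2 by omega]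
    ring

/-! ## congruences mod X^N -/

lemma modc {N : ℕ} {a b c d : S} (h1 : X^N ∣ a - b) (h2 : X^N ∣ c - d) :
    X^N ∣ a*c - b*d := by
  have e : a*c - b*d = (a-b)*c + b*(c-d) := by ring
  rw [e]; exact dvd_add (h1.mul_right c) (h2.mul_left b)

lemma modt {N : ℕ} {a b c : S} (h1 : X^N ∣ a - b) (h2 : X^N ∣ b - c) : X^N ∣ a - c := by
  have e : a - c = (a-b) + (b-c) := by ring
  rw [e]; exact dvd_add h1 h2

lemma mods {N : ℕ} {a b : S} (h : X^N ∣ a - b) : X^N ∣ b - a := by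
  have e : b - a = -(a-b) := by ring
  rw [e]; exact h.neg_right

lemma modr {N : ℕ} (a : S) : X^N ∣ a - a := by simp

lemma inv_congr {N : ℕ} {u v : S} (hu : constantCoeff (R := ℚ) u ≠ 0) (hv : constantCoeff (R := ℚ) v ≠ 0)
    (h : X^N ∣ u - v) : X^N ∣ u⁻¹ - v⁻¹ := by
  have e : u⁻¹ - v⁻¹ = u⁻¹ * (v * v⁻¹) - (u * u⁻¹) * v⁻¹ := by
    rw [PowerSeries.mul_inv_cancel _ hu, PowerSeries.mul_inv_cancel _ hv]; ring
  have e2 : u⁻¹ * (v * v⁻¹) - (u * u⁻¹) * v⁻¹ = (u⁻¹ * v⁻¹) * (v - u) := by ring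
  rw [e, e2]
  exact (mods h).mul_left _

lemma prod_tail (g : ℕ → ℕ) {N M m : ℕ} (hMm : M ≤ m) (hg : ∀ r, M ≤ r → N ≤ g r) :
    X^N ∣ (∏ i ∈ range m, (1 - (X:S)^(g i))) - (∏ i ∈ range M, (1 - (X:S)^(g i))) := by
  induction m, hMm using Nat.le_induction with
  | base => exact modr _
  | succ m hm ih =>
    refine modt ?_ ih
    rw [prod_range_succ]
    have e : (∏ i ∈ range m, (1 - (X:S)^(g i))) * (1 - X^(g m)) - (∏ i ∈ range m, (1 - (X:S)^(g i)))
        = -((∏ i ∈ range m, (1 - (X:S)^(g i))) * X^(g m)) := by ring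
    rw [e]
    exact ((pow_dvd_pow (X:S) (hg m hm)).mul_left _).neg_right

lemma F_congr {N a b : ℕ} (ha : N ≤ a) (hb : N ≤ b) : X^N ∣ F a - F b := by
  rcases le_total a b with h | h
  · exact mods (prod_tail (fun i => i+1) h (fun r hr => by show N ≤ r+1; omega))
  · exact prod_tail (fun i => i+1) h (fun r hr => by show N ≤ r+1; omega)

lemma OddP_congr {N a b : ℕ} (ha : N ≤ 2*a+1) (hb : N ≤ 2*b+1) : X^N ∣ OddP a - OddP b := by
  rcases le_total a b with h | h
  · exact mods (prod_tail (fun i => 2*i+1) h (fun r hr => by show N ≤ 2*r+1; omega))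
  · exact prod_tail (fun i => 2*i+1) h (fun r hr => by show N ≤ 2*r+1; omega)

lemma EvenP_congr {N a b : ℕ} (ha : N ≤ 2*a+2) (hb : N ≤ 2*b+2) : X^N ∣ EvenP a - EvenP b := by
  rcases le_total a b with h | h
  · exact mods (prod_tail (fun i => 2*i+2) h (fun r hr => by show N ≤ 2*r+2; omega))
  · exact prod_tail (fun i => 2*i+2) h (fun r hr => by show N ≤ 2*r+2; omega)

/-! ## the window congruence for gb -/

lemma gb_congr {n k : ℕ} (h1 : n+1 ≤ k) (h2 : n+1 ≤ 2*(2*n+2) - k) (hk : k ≤ 2*(2*n+2)) :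
    X^(n+1) ∣ gb (2*(2*n+2)) k - F (2*(2*n+2)) * ((F (2*n+2))⁻¹ * (F (2*n+2))⁻¹) := by
  rw [gb_eq hk]
  have e : F (2*(2*n+2)) * (F k)⁻¹ * (F (2*(2*n+2)-k))⁻¹
      = F (2*(2*n+2)) * ((F k)⁻¹ * (F (2*(2*n+2)-k))⁻¹) := by ring
  rw [e]
  refine modc (modr _) (modc ?_ ?_)
  · exact inv_congr (by rw [constCoeff_F]; exact one_ne_zero) (by rw [constCoeff_F]; exact one_ne_zero)
      (F_congr h1 (by omega))
  · exact inv_congr (by rw [constCoeff_F]; exact one_ne_zero) (by rw [constCoeff_F]; exact one_ne_zero)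
      (F_congr (by omega) (by omega))

lemma window {n k : ℕ} (ht : tri k (2*n+2) ≤ n) :
    n+1 ≤ k ∧ n+1 ≤ 2*(2*n+2) - k ∧ k ≤ 2*(2*n+2) := by
  rcases Nat.lt_or_ge k (2*n+2) with h | h
  · rw [tri_of_lt h] at ht
    have := le_half (2*n+2-k-1)
    omega
  · rw [tri_of_ge h] at ht
    have := le_half (k-(2*n+2))
    omega

/-! ## theta pairing -/

lemma theta_trunc {n M : ℕ} (hM : n+1 ≤ M) :
    (∑ j ∈ range M, if half j ≤ n then (X:S)^(half j) else 0) = Th n := by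
  rw [Th, show M = (n+1) + (M - (n+1)) by omega, Finset.sum_range_add]
  have e : ∀ i, (if half ((n+1)+i) ≤ n then (X:S)^(half ((n+1)+i)) else 0) = 0 := by
    intro i
    rw [if_neg]
    have := le_half ((n+1)+i)
    omega
  rw [Finset.sum_congr rfl (fun i _ => e i), Finset.sum_const_zero, add_zero]

lemma theta_sum (n : ℕ) :
    (∑ k ∈ range (2*(2*n+2)+1), if tri k (2*n+2) ≤ n then (X:S)^(tri k (2*n+2)) else 0)
      = 2 * Th n := by
  set m := 2*n+2 with hm
  rw [show 2*m+1 = m + (m+1) by omega, Finset.sum_range_add]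
  have lower : (∑ i ∈ range m, if tri i m ≤ n then (X:S)^(tri i m) else 0) = Th n := by
    rw [← Finset.sum_range_reflect]
    have e : ∀ j, j < m → (if tri (m-1-j) m ≤ n then (X:S)^(tri (m-1-j) m) else 0)
        = (if half j ≤ n then (X:S)^(half j) else 0) := by
      intro j hj
      rw [tri_of_lt (by omega), show m-(m-1-j)-1 = j by omega]
    rw [Finset.sum_congr rfl (fun j hj => e j (mem_range.mp hj))]
    exact theta_trunc (by omega)
  have upper : (∑ i ∈ range (m+1), if tri (m+i) m ≤ n then (X:S)^(tri (m+i) m) else 0) = Th n := by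
    have e : ∀ i, (if tri (m+i) m ≤ n then (X:S)^(tri (m+i) m) else 0)
        = (if half i ≤ n then (X:S)^(half i) else 0) := by
      intro i
      rw [tri_of_ge (by omega), show m+i-m = i by omega]
    rw [Finset.sum_congr rfl (fun i _ => e i)]
    exact theta_trunc (by omega)
  rw [lower, upper]
  ring

/-! ## RHSsum ≡ G₀ · 2Θ -/

lemma RHS_congr (n : ℕ) :
    X^(n+1) ∣ RHSsum (2*n+2)
      - F (2*(2*n+2)) * ((F (2*n+2))⁻¹ * (F (2*n+2))⁻¹) * (2 * Th n) := by
  set G0 := F (2*(2*n+2)) * ((F (2*n+2))⁻¹ * (F (2*n+2))⁻¹) with hG0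
  rw [← theta_sum n, Finset.mul_sum, RHSsum, ← Finset.sum_sub_distrib]
  refine Finset.dvd_sum fun k hk => ?_
  by_cases h : tri k (2*n+2) ≤ n
  · rw [if_pos h]
    obtain ⟨w1, w2, w3⟩ := window h
    have e : gb (2*(2*n+2)) k * X^(tri k (2*n+2)) - G0 * X^(tri k (2*n+2))
        = (gb (2*(2*n+2)) k - G0) * X^(tri k (2*n+2)) := by ring
    rw [e]
    exact (gb_congr w1 w2 w3).mul_right _
  · rw [if_neg h, mul_zero, sub_zero]
    exact ((pow_dvd_pow (X:S) (by omega)).mul_left _)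


/-! ## Euler: Dist · OddP ≡ 1 -/

lemma same_gf_q (r : ℕ) :
    (∏ i ∈ range r, (1 - (X:S)^(2*i+1))⁻¹) * (∏ i ∈ range r, (1 - (X:S)^(r+i+1))) = Dist r := by
  have h := Theorems100.same_gf (α := ℚ) r
  rw [Theorems100.partialOddGF, Theorems100.partialDistinctGF] at h
  exact h

lemma Dist_OddP_congr {N r : ℕ} (hr : N ≤ r+1) : X^N ∣ Dist r * OddP r - 1 := by
  have h1 : OddP r * (∏ i ∈ range r, (1 - (X:S)^(2*i+1))⁻¹) = 1 := by
    rw [OddP, ← Finset.prod_mul_distrib]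
    apply Finset.prod_eq_one
    intro i _
    exact PowerSeries.mul_inv_cancel _
      (by rw [show 2*i+1 = (2*i)+1 by omega, cc_one_sub]; exact one_ne_zero)
  have h2 : Dist r * OddP r = ∏ i ∈ range r, (1 - (X:S)^(r+i+1)) := by
    rw [← same_gf_q r]
    calc (∏ i ∈ range r, (1 - (X:S)^(2*i+1))⁻¹) * (∏ i ∈ range r, (1 - (X:S)^(r+i+1))) * OddP r
        = (OddP r * ∏ i ∈ range r, (1 - (X:S)^(2*i+1))⁻¹) * (∏ i ∈ range r, (1 - (X:S)^(r+i+1))) := by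
          ring
      _ = ∏ i ∈ range r, (1 - (X:S)^(r+i+1)) := by rw [h1, one_mul]
  rw [h2]
  have := prod_tail (fun i => r+i+1) (Nat.zero_le r) (fun i _ => by show N ≤ r+i+1; omega)
  simpa using this

/-! ## cancellation -/

lemma cancel {w a : S} {N : ℕ} (hw : constantCoeff (R := ℚ) w ≠ 0) (h : X^N ∣ a * w) : X^N ∣ a := by
  rw [PowerSeries.X_pow_dvd_iff] at h ⊢
  intro d
  induction d using Nat.strong_induction_on with
  | _ d ih =>
    intro hd
    have hc := h d hd
    rw [PowerSeries.coeff_mul] at hc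
    rw [Finset.sum_eq_single ((d, 0) : ℕ × ℕ)] at hc
    · rw [PowerSeries.coeff_zero_eq_constantCoeff] at hc
      exact (mul_eq_zero.mp hc).resolve_right hw
    · intro p hp hne
      rw [Finset.HasAntidiagonal.mem_antidiagonal] at hp
      have hp1 : p.1 < d := by
        rcases Nat.lt_or_ge p.1 d with h' | h'
        · exact h'
        · exfalso
          apply hne
          have e1 : p.1 = d := by omega
          have e2 : p.2 = 0 := by omega
          exact Prod.ext e1 e2
      rw [ih p.1 hp1 (by omega), zero_mul]
    · intro hnot
      exact absurd (Finset.HasAntidiagonal.mem_antidiagonal.mpr (by simp)) hnot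

lemma half_dvd {N : ℕ} {x : S} (h : X^N ∣ 2 * x) : X^N ∣ x := by
  have h2 : (PowerSeries.C (R := ℚ) (1/2)) * (2:S) = 1 := by
    have e : (2:S) = PowerSeries.C (R := ℚ) 2 := by
      rw [map_ofNat]
    rw [e, ← map_mul]
    norm_num
  have e : x = (PowerSeries.C (R := ℚ) (1/2)) * (2 * x) := by
    calc x = 1 * x := (one_mul x).symm
      _ = ((PowerSeries.C (R := ℚ) (1/2)) * 2) * x := by rw [h2]
      _ = (PowerSeries.C (R := ℚ) (1/2)) * (2 * x) := by ring
  rw [e]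
  exact h.mul_left _

/-! ## constant coefficients -/

lemma cc_Dist (r : ℕ) : constantCoeff (R := ℚ) (Dist r) = 1 := by
  rw [Dist, map_prod]
  apply Finset.prod_eq_one
  intro i _
  simp [zero_pow]

/-! ## the key congruence -/

theorem key (n : ℕ) : X^(n+1) ∣ Dist (2*n+1) - Th n * pEG (n+1) := by
  set m := 2*n+2 with hm
  have c1 : 2 * (Dist (2*n+1) * Dist m) = RHSsum m := by
    rw [← FJ m, Finset.prod_mul_distrib]
    have e1 : (∏ i ∈ range m, (1 + (X:S)^i)) = 2 * Dist (2*n+1) := by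
      rw [hm, show 2*n+2 = (2*n+1)+1 by omega, Finset.prod_range_succ', pow_zero]
      rw [Dist]
      ring
    have e2 : (∏ i ∈ range m, (1 + (X:S)^(i+1))) = Dist m := rfl
    rw [e1, e2]
    ring
  have H1 : X^(n+1) ∣ 2 * (Dist (2*n+1) * Dist m)
      - F (2*m) * ((F m)⁻¹*(F m)⁻¹) * (2 * Th n) := by
    rw [c1, hm]
    exact RHS_congr n
  have H2 : X^(n+1) ∣ Dist (2*n+1) * Dist m - F (2*m) * ((F m)⁻¹*(F m)⁻¹) * Th n := by
    apply half_dvd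
    have e : 2 * (Dist (2*n+1) * Dist m - F (2*m) * ((F m)⁻¹*(F m)⁻¹) * Th n)
        = 2 * (Dist (2*n+1) * Dist m) - F (2*m) * ((F m)⁻¹*(F m)⁻¹) * (2 * Th n) := by ring
    rw [e]
    exact H1
  have hFm : F (2*m) * ((F m)⁻¹ * (F m)⁻¹) * Th n * (F m * F m) = Th n * F (2*m) := by
    calc F (2*m) * ((F m)⁻¹ * (F m)⁻¹) * Th n * (F m * F m)
        = F (2*m) * Th n * (((F m)⁻¹ * F m) * ((F m)⁻¹ * F m)) := by ring
      _ = Th n * F (2*m) := by rw [F_inv_mul]; ring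
  have H3 : X^(n+1) ∣ Dist (2*n+1) * Dist m * (F m * F m) - Th n * F (2*m) := by
    rw [← hFm]
    exact modc H2 (modr (F m * F m))
  -- second piece
  have split2 : Th n * (pEG (n+1) * (Dist m * (F m * F m)))
      = Th n * (Dist m * (OddP (n+1) * (OddP (n+1) * EvenP (n+1)))) := by
    have e : F m = OddP (n+1) * EvenP (n+1) := by
      rw [hm, show 2*n+2 = 2*(n+1) by omega]
      exact F_split (n+1)
    rw [e]
    have e2 : pEG (n+1) * (Dist m * (OddP (n+1) * EvenP (n+1) * (OddP (n+1) * EvenP (n+1))))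
        = (EvenP (n+1) * pEG (n+1)) * (Dist m * (OddP (n+1) * (OddP (n+1) * EvenP (n+1)))) := by
      ring
    rw [e2, EvenP_mul_pEG, one_mul]
  have H6 : X^(n+1) ∣ Dist m * (OddP (n+1) * (OddP (n+1) * EvenP (n+1))) - F (2*m) := by
    have eF : F (2*m) = OddP (2*n+2) * EvenP (2*n+2) := by
      rw [hm, show 2*(2*n+2) = 2*(2*n+2) by rfl]
      exact F_split (2*n+2)
    rw [eF]
    have hD : X^(n+1) ∣ Dist m * OddP (n+1) - 1 := by
      refine modt (modc (modr (Dist m))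
        (OddP_congr (N := n+1) (a := n+1) (b := 2*n+2) (by omega) (by omega))) ?_
      exact Dist_OddP_congr (by omega)
    have e : Dist m * (OddP (n+1) * (OddP (n+1) * EvenP (n+1)))
        = (Dist m * OddP (n+1)) * (OddP (n+1) * EvenP (n+1)) := by ring
    rw [e]
    have := modc hD (modc (OddP_congr (N := n+1) (a := n+1) (b := 2*n+2) (by omega) (by omega))
      (EvenP_congr (N := n+1) (a := n+1) (b := 2*n+2) (by omega) (by omega)))
    simpa using this
  -- assemble
  apply cancel (w := Dist m * (F m * F m))
  · rw [map_mul, map_mul, cc_Dist, constCoeff_F]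
    norm_num
  · have Hw : (Dist (2*n+1) - Th n * pEG (n+1)) * (Dist m * (F m * F m))
        = (Dist (2*n+1) * Dist m * (F m * F m) - Th n * F (2*m))
          - (Th n * (pEG (n+1) * (Dist m * (F m * F m)))
              - Th n * (Dist m * (OddP (n+1) * (OddP (n+1) * EvenP (n+1)))))
          - (Th n * (Dist m * (OddP (n+1) * (OddP (n+1) * EvenP (n+1)))) - Th n * F (2*m)) := by
      ring
    rw [Hw, split2, sub_self, sub_zero]
    refine dvd_sub H3 ?_
    have e : Th n * (Dist m * (OddP (n+1) * (OddP (n+1) * EvenP (n+1)))) - Th n * F (2*m)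
        = Th n * (Dist m * (OddP (n+1) * (OddP (n+1) * EvenP (n+1))) - F (2*m)) := by ring
    rw [e]
    exact H6.mul_left _
def mkEven : ℕ ↪ ℕ := ⟨fun i => 2*i+2, fun x y h => by dsimp at h; omega⟩

theorem pEG_prop (n r : ℕ) :
    #{p : n.Partition | ∀ j ∈ p.parts, j ∈ (range r).map mkEven} = coeff (R := ℚ) n (pEG r) := by
  rw [pEG]
  convert partialGF_prop ℚ n
    ((range r).map mkEven) _ (fun _ => Set.univ) (fun _ _ => trivial) using 2
  · congr
  · congr
    simp only [true_and, forall_const, Set.mem_univ]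
  · rw [Finset.prod_map]
    simp_rw [show ∀ i:ℕ, (2:ℕ)*i+2 = (2*i+1)+1 from fun i => by omega, num_series']
    congr! 2 with x
    simp only [mkEven, Function.Embedding.coeFn_mk]
    ext k
    simp only [Set.mem_setOf_eq, Set.mem_image, Set.mem_univ, true_and]
    constructor
    · rintro ⟨p, rfl⟩
      exact ⟨p, by change _ * (2 * _ + 2) = _; ring⟩
    · rintro ⟨a, rfl⟩
      exact ⟨a, by change _ * (2 * _ + 2) = _; ring⟩
  · intro i hi
    rw [mem_map] at hi
    obtain ⟨a, -, rfl⟩ := hi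
    show 0 < 2*a+2
    omega

theorem even_count {d r : ℕ} (h : d < 2*r+2) :
    #{p : d.Partition | ∀ j ∈ p.parts, Even j} = coeff (R := ℚ) d (pEG r) := by
  rw [← pEG_prop]
  norm_cast
  refine congr_arg Finset.card ?_
  apply Finset.filter_congr
  intro p _
  constructor
  · intro hp j hj
    have hj1 : 0 < j := p.parts_pos hj
    have hj2 : j ≤ d := by
      have := Multiset.single_le_sum (fun _ _ => Nat.zero_le _) _ hj
      rw [p.parts_sum] at this
      exact this
    obtain ⟨a, ha⟩ := hp j hj
    rw [mem_map]
    refine ⟨a - 1, mem_range.mpr (by omega), ?_⟩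
    show 2*(a-1)+2 = j
    omega
  · intro hp j hj
    have := hp j hj
    rw [mem_map] at this
    obtain ⟨a, -, rfl⟩ := this
    show Even (2*a+2)
    exact ⟨a+1, by omega⟩

lemma sum_map_half (s : Multiset ℕ) (h : ∀ j ∈ s, Even j) : (s.map (fun x => x / 2)).sum * 2 = s.sum := by
  induction s using Multiset.induction with
  | empty => simp
  | cons a s ih =>
    rw [Multiset.map_cons, Multiset.sum_cons, Multiset.sum_cons, add_mul,
      Nat.div_mul_cancel ((h a (Multiset.mem_cons_self a s)).two_dvd),
      ih (fun j hj => h j (Multiset.mem_cons_of_mem hj))]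

lemma sum_map_two_mul (s : Multiset ℕ) : (s.map (fun x => 2*x)).sum = 2 * s.sum := by
  induction s using Multiset.induction with
  | empty => simp
  | cons a s ih =>
    rw [Multiset.map_cons, Multiset.sum_cons, Multiset.sum_cons, ih, Nat.mul_add]

def dblP (r : ℕ) (p : Nat.Partition r) : Nat.Partition (2*r) where
  parts := p.parts.map (fun x => 2*x)
  parts_pos := by
    intro i hi
    obtain ⟨a, ha, rfl⟩ := Multiset.mem_map.mp hi
    have := p.parts_pos ha
    omega
  parts_sum := by rw [sum_map_two_mul, p.parts_sum]

def halfP (r : ℕ) (q : Nat.Partition (2*r)) (hq : ∀ j ∈ q.parts, Even j) :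
    Nat.Partition r where
  parts := q.parts.map (fun x => x / 2)
  parts_pos := by
    intro i hi
    obtain ⟨a, ha, rfl⟩ := Multiset.mem_map.mp hi
    have h1 := q.parts_pos ha
    obtain ⟨b, hb⟩ := hq a ha
    omega
  parts_sum := by
    have := sum_map_half q.parts hq
    rw [q.parts_sum] at this
    omega

theorem even_card (r : ℕ) :
    #{p : Nat.Partition (2*r) | ∀ j ∈ p.parts, Even j} = Fintype.card (Nat.Partition r) := by
  rw [Fintype.card]
  refine Finset.card_bij'
    (fun q hq => halfP r q (Finset.mem_filter.mp hq).2)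
    (fun p _ => dblP r p) ?hi ?hj ?left ?right
  case hi => intro q hq; exact Finset.mem_univ _
  case hj =>
    intro p hp
    rw [Finset.mem_filter]
    refine ⟨Finset.mem_univ _, ?_⟩
    intro j hj
    obtain ⟨a, ha, rfl⟩ := Multiset.mem_map.mp hj
    exact ⟨a, two_mul a⟩
  case left =>
    intro q hq
    apply Nat.Partition.ext
    show Multiset.map (fun x => 2*x) (Multiset.map (fun x => x/2) q.parts) = q.parts
    rw [Multiset.map_map]
    have he : ∀ x ∈ q.parts, ((fun x => 2*x) ∘ (fun x => x/2)) x = x := by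
      intro x hx
      exact Nat.mul_div_cancel' ((Finset.mem_filter.mp hq).2 x hx).two_dvd
    rw [Multiset.map_congr rfl he, Multiset.map_id']
  case right =>
    intro p hp
    apply Nat.Partition.ext
    show Multiset.map (fun x => x/2) (Multiset.map (fun x => 2*x) p.parts) = p.parts
    rw [Multiset.map_map]
    have he : ∀ x ∈ p.parts, ((fun x => x/2) ∘ (fun x => 2*x)) x = x := by
      intro x hx
      show 2 * x / 2 = x
      omega
    rw [Multiset.map_congr rfl he, Multiset.map_id']


lemma coeff_eq_of_dvd {N : ℕ} {f g : S} (h : X^N ∣ f - g) {d : ℕ} (hd : d < N) :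
    coeff (R := ℚ) d f = coeff (R := ℚ) d g := by
  rw [PowerSeries.X_pow_dvd_iff] at h
  have h2 := h d hd
  rw [map_sub, sub_eq_zero] at h2
  exact h2

theorem count_distincts (n : ℕ) :
    (#(Nat.Partition.distincts n) : ℚ)
      = ∑ j ∈ range (n+1), if half j ≤ n then
          (#{p : Nat.Partition (n - half j) | ∀ i ∈ p.parts, Even i} : ℚ) else 0 := by
  have h1 : (#(Nat.Partition.distincts n) : ℚ) = coeff (R := ℚ) n (Dist (2*n+1)) := by
    rw [distinctGF_prop (α := ℚ) n (2*n+1) (by omega)]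
    rfl
  rw [h1, coeff_eq_of_dvd (key n) (by omega : n < n+1)]
  rw [Th, Finset.sum_mul, map_sum]
  refine Finset.sum_congr rfl fun j hj => ?_
  rw [ite_mul, zero_mul, apply_ite (coeff (R := ℚ) n), map_zero]
  by_cases hc : half j ≤ n
  · rw [if_pos hc, if_pos hc]
    have e := PowerSeries.coeff_X_pow_mul (pEG (n+1)) (half j) (n - half j)
    rw [show n - half j + half j = n by omega] at e
    rw [e, ← even_count (show n - half j < 2*(n+1)+2 by omega)]
  · rw [if_neg hc, if_neg hc]

theorem main_count (n : ℕ) (hn : Odd n) :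
    #(Nat.Partition.odds n)
      = ∑ j ∈ range (n+1), if Odd (half j) ∧ half j ≤ n then
          Fintype.card (Nat.Partition ((n - half j)/2)) else 0 := by
  have hq : (#(Nat.Partition.odds n) : ℚ)
      = ∑ j ∈ range (n+1), (if Odd (half j) ∧ half j ≤ n then
          (Fintype.card (Nat.Partition ((n - half j)/2)) : ℚ) else 0) := by
    rw [show #(Nat.Partition.odds n) = #(Nat.Partition.distincts n) from
      Theorems100.partition_theorem n, count_distincts n]
    refine Finset.sum_congr rfl fun j hj => ?_
    by_cases hc : half j ≤ n
    · by_cases ho : Odd (half j)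
      · rw [if_pos hc, if_pos ⟨ho, hc⟩]
        have he : Even (n - half j) := Nat.Odd.sub_odd hn ho
        obtain ⟨r, hr⟩ := he
        rw [show n - half j = 2*r by omega, even_card r, show 2*r/2 = r by omega]
      · rw [if_pos hc, if_neg (by tauto)]
        have heven : Even (half j) := Nat.not_odd_iff_even.mp ho
        have hodd : Odd (n - half j) := Nat.Odd.sub_even hc hn heven
        norm_cast
        rw [Finset.card_eq_zero, Finset.filter_eq_empty_iff]
        intro q _
        intro hall
        have : (2:ℕ) ∣ q.parts.sum := Multiset.dvd_sum (fun x hx => (hall x hx).two_dvd)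
        rw [q.parts_sum] at this
        rw [Nat.odd_iff] at hodd
        omega
    · rw [if_neg hc, if_neg (by tauto)]
  exact_mod_cast hq

theorem final (n : ℕ) (hn : Odd n) :
    ((#(Nat.Partition.odds n) : ℤ)) = ∑' j : ℕ, if Odd (j*(j+1)/2) ∧ j*(j+1)/2 ≤ n then
        (Fintype.card (Nat.Partition ((n - j*(j+1)/2)/2)) : ℤ) else 0 := by
  rw [tsum_eq_sum (s := range (n+1)) ?_]
  · rw [main_count n hn]
    push_cast
    refine Finset.sum_congr rfl fun j hj => ?_
    rfl
  · intro j hj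
    rw [if_neg]
    rintro ⟨-, hle⟩
    have h2 := le_half j
    rw [mem_range] at hj
    have : half j = j*(j+1)/2 := rfl
    omega

end
end GaussAux


/-- `p n` is the number of (unrestricted) partitions of `n`. -/
noncomputable def p (n : ℕ) : ℕ := Fintype.card (Nat.Partition n)

/-- `po n` is the number of partitions of `n` into odd parts. -/
def po (n : ℕ) : ℕ := (Nat.Partition.odds n).card

/-- For every odd `n ≥ 1`, the number of partitions of `n` into odd parts equals
the sum of `p ((n - t) / 2)` over all odd triangular numbers `t = j * (j + 1) / 2 ≤ n`. -/
theorem stmt1 (n : ℕ) (hn : Odd n) :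
    (po n : ℤ) =
      ∑' j : ℕ, if Odd (j * (j + 1) / 2) ∧ j * (j + 1) / 2 ≤ n then
        (p ((n - j * (j + 1) / 2) / 2) : ℤ) else 0 := by
  exact GaussAux.final n hn
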